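/- For every α ∈ (0,1/2), the real number x = Φ̄⁻¹(α) (which is positive) satisfies log(1/α) + log(1/√(2π)) − 1 < x² < 2·log(1/α) + log(1/π). In particular Φ̄⁻¹(α) = Θ(√(log(1/α))). -/
import Mathlib

open MeasureTheory

/-- The standard normal survival function `Φ̄(x) = ∫_x^∞ (1/√(2π)) exp(-t²/2) dt`. -/
noncomputable def Phibar (x : ℝ) : ℝ :=
  ∫ t in Set.Ioi x, (Real.sqrt (2 * Real.pi))⁻¹ * Real.exp (-t ^ 2 / 2)

/-- The inverse of the standard normal survival function on `(0,1)`. -/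
noncomputable def PhibarInv : ℝ → ℝ := Function.invFun Phibar

namespace PhibarAux

noncomputable def f (t : ℝ) : ℝ := (Real.sqrt (2 * Real.pi))⁻¹ * Real.exp (-t ^ 2 / 2)

lemma sqrt2pi_pos : 0 < Real.sqrt (2 * Real.pi) :=
  Real.sqrt_pos.2 (by positivity)

lemma f_pos (t : ℝ) : 0 < f t := by
  have := sqrt2pi_pos
  unfold f; positivity

lemma f_cont : Continuous f := by
  unfold f; fun_prop

lemma exp_integrable : Integrable (fun t : ℝ => Real.exp (-t ^ 2 / 2)) := by
  have h := integrable_exp_neg_mul_sq (b := (1 : ℝ) / 2) (by norm_num)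
  convert h using 2 with t
  ring_nf

lemma f_integrable : Integrable f := by
  unfold f
  exact exp_integrable.const_mul _

lemma Phibar_eq_f (x : ℝ) : Phibar x = ∫ t in Set.Ioi x, f t := rfl

lemma Phibar_split {a b : ℝ} (h : a ≤ b) :
    Phibar a = (∫ t in Set.Ioc a b, f t) + Phibar b := by
  rw [Phibar_eq_f, Phibar_eq_f, ← Set.Ioc_union_Ioi_eq_Ioi h,
    setIntegral_union (Set.Ioc_disjoint_Ioi le_rfl) measurableSet_Ioi
      f_integrable.integrableOn f_integrable.integrableOn]

lemma Phibar_nonneg (x : ℝ) : 0 ≤ Phibar x :=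
  setIntegral_nonneg measurableSet_Ioi fun t _ => (f_pos t).le

lemma Phibar_strictAnti : StrictAnti Phibar := by
  intro a b hab
  have hpos : 0 < ∫ t in Set.Ioc a b, f t := by
    rw [← intervalIntegral.integral_of_le hab.le]
    exact intervalIntegral.integral_pos hab f_cont.continuousOn
      (fun x _ => (f_pos x).le) ⟨a, Set.left_mem_Icc.2 hab.le, f_pos a⟩
  have := Phibar_split hab.le
  linarith

lemma exp_Ioi_zero : (∫ t in Set.Ioi (0 : ℝ), Real.exp (-t ^ 2 / 2))
    = Real.sqrt (2 * Real.pi) / 2 := by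
  have h := integral_gaussian_Ioi (1 / 2)
  have h2 : (∫ t in Set.Ioi (0 : ℝ), Real.exp (-t ^ 2 / 2))
      = ∫ x in Set.Ioi (0 : ℝ), Real.exp (-(1 / 2) * x ^ 2) := by
    congr 1 with t; ring_nf
  rw [h2, h]
  rw [show Real.pi / (1 / 2) = 2 * Real.pi by ring]

lemma Phibar_zero : Phibar 0 = 1 / 2 := by
  rw [Phibar, integral_const_mul, exp_Ioi_zero]
  field_simp

lemma shift_integral (x : ℝ) :
    (∫ t in Set.Ioi x, Real.exp (-(t - x) ^ 2 / 2))
      = ∫ t in Set.Ioi (0 : ℝ), Real.exp (-t ^ 2 / 2) := by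
  have hmp : MeasurePreserving (fun t : ℝ => t + x) volume volume :=
    measurePreserving_add_right volume x
  have hme : MeasurableEmbedding (fun t : ℝ => t + x) :=
    (Homeomorph.addRight x).measurableEmbedding
  have h := hmp.setIntegral_preimage_emb hme
    (fun t => Real.exp (-(t - x) ^ 2 / 2)) (Set.Ioi x)
  have hpre : (fun t : ℝ => t + x) ⁻¹' Set.Ioi x = Set.Ioi 0 := by
    ext t; simp
  rw [hpre] at h
  rw [← h]
  congr 1 with t
  ring_nf

lemma Phibar_le {x : ℝ} (hx : 0 ≤ x) : Phibar x ≤ Real.exp (-x ^ 2 / 2) / 2 := by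
  have hint2 : Integrable (fun t : ℝ => Real.exp (-(t - x) ^ 2 / 2)) := by
    have := exp_integrable.comp_sub_right x
    simpa using this
  have hmono : Phibar x ≤ ∫ t in Set.Ioi x,
      (Real.sqrt (2 * Real.pi))⁻¹ * (Real.exp (-x ^ 2 / 2) * Real.exp (-(t - x) ^ 2 / 2)) := by
    rw [Phibar_eq_f]
    refine setIntegral_mono_on f_integrable.integrableOn ?_ measurableSet_Ioi ?_
    · exact ((hint2.const_mul _).const_mul _).integrableOn
    · intro t ht
      have ht' : x ≤ t := (Set.mem_Ioi.1 ht).le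
      unfold f
      rw [← Real.exp_add]
      have h0 : 0 ≤ (Real.sqrt (2 * Real.pi))⁻¹ := (inv_pos.2 sqrt2pi_pos).le
      exact mul_le_mul_of_nonneg_left (Real.exp_le_exp.2 (by nlinarith)) h0
  have heval : (∫ t in Set.Ioi x,
      (Real.sqrt (2 * Real.pi))⁻¹ * (Real.exp (-x ^ 2 / 2) * Real.exp (-(t - x) ^ 2 / 2)))
      = Real.exp (-x ^ 2 / 2) / 2 := by
    rw [integral_const_mul, integral_const_mul, shift_integral, exp_Ioi_zero]
    field_simp
  linarith [hmono, heval.le, heval.ge]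

lemma Phibar_gt {x : ℝ} (hx : 0 < x) :
    (Real.sqrt (2 * Real.pi))⁻¹ * Real.exp (-(x ^ 2 + 1)) < Phibar x := by
  set y := Real.sqrt (2 * x ^ 2 + 2) with hy
  have hy0 : 0 ≤ y := Real.sqrt_nonneg _
  have hy2 : y ^ 2 = 2 * x ^ 2 + 2 := Real.sq_sqrt (by positivity)
  have hxy : x + 1 ≤ y := by
    have h1 : (x + 1) ^ 2 ≤ y ^ 2 := by nlinarith [sq_nonneg (x - 1)]
    nlinarith
  have hxlt : x < y := by linarith
  set c : ℝ := (Real.sqrt (2 * Real.pi))⁻¹ * Real.exp (-(x ^ 2 + 1)) with hc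
  have hcpos : 0 < c := by
    have := sqrt2pi_pos; rw [hc]; positivity
  have h2 : (y - x) * c < ∫ t in x..y, f t := by
    have hstrict := intervalIntegral.integral_lt_integral_of_continuousOn_of_le_of_exists_lt
      (f := fun _ => c) (g := f) hxlt continuousOn_const f_cont.continuousOn
      (fun t ht => by
        have ht1 : x < t := ht.1
        have ht2 : t ≤ y := ht.2
        have htpos : 0 < t := hx.trans ht1
        have : t ^ 2 ≤ y ^ 2 := by nlinarith
        have hle : -(x ^ 2 + 1) ≤ -t ^ 2 / 2 := by nlinarith
        rw [hc]
        unfold f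
        exact mul_le_mul_of_nonneg_left (Real.exp_le_exp.2 hle)
          (inv_pos.2 sqrt2pi_pos).le)
      ⟨x, Set.left_mem_Icc.2 hxlt.le, by
        rw [hc]; unfold f
        exact mul_lt_mul_of_pos_left (Real.exp_lt_exp.2 (by nlinarith))
          (inv_pos.2 sqrt2pi_pos)⟩
    rw [intervalIntegral.integral_const, smul_eq_mul] at hstrict
    exact hstrict
  have h3 : c ≤ (y - x) * c := le_mul_of_one_le_left hcpos.le (by linarith)
  have hsplit := Phibar_split hxlt.le
  have hIoc : (∫ t in Set.Ioc x y, f t) = ∫ t in x..y, f t :=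
    (intervalIntegral.integral_of_le hxlt.le).symm
  have hnn := Phibar_nonneg y
  linarith [h2, hsplit, hIoc.le, hIoc.ge]

lemma Phibar_repr (x : ℝ) : Phibar x = Phibar 0 - ∫ t in (0 : ℝ)..x, f t := by
  rcases le_total 0 x with h | h
  · have := Phibar_split h
    rw [intervalIntegral.integral_of_le h]
    linarith
  · have := Phibar_split h
    rw [intervalIntegral.integral_symm, intervalIntegral.integral_of_le h]
    linarith

lemma Phibar_continuous : Continuous Phibar := by
  have : Phibar = fun x => Phibar 0 - ∫ t in (0 : ℝ)..x, f t := funext Phibar_repr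
  rw [this]
  exact continuous_const.sub (f_integrable.continuous_primitive 0)

lemma exists_Phibar_eq {α : ℝ} (h0 : 0 < α) (h2 : α < 1 / 2) : ∃ x, Phibar x = α := by
  have hlog : 0 < Real.log (1 / α) := Real.log_pos (by rw [lt_div_iff₀ h0]; linarith)
  set b := max 1 (Real.sqrt (2 * Real.log (1 / α))) with hb
  have hb1 : (1 : ℝ) ≤ b := le_max_left _ _
  have hb0 : 0 ≤ b := by linarith
  have hsq : Real.sqrt (2 * Real.log (1 / α)) ≤ b := le_max_right _ _
  have hsq2 : (Real.sqrt (2 * Real.log (1 / α))) ^ 2 = 2 * Real.log (1 / α) :=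
    Real.sq_sqrt (by linarith)
  have hb2 : 2 * Real.log (1 / α) ≤ b ^ 2 := by
    nlinarith [Real.sqrt_nonneg (2 * Real.log (1 / α))]
  have hPb : Phibar b ≤ α / 2 := by
    have h1 := Phibar_le hb0
    have h2' : Real.exp (-b ^ 2 / 2) ≤ Real.exp (-Real.log (1 / α)) :=
      Real.exp_le_exp.2 (by linarith)
    have h3 : Real.exp (-Real.log (1 / α)) = α := by
      rw [Real.exp_neg, Real.exp_log (by positivity)]
      simp
    rw [h3] at h2'
    linarith
  have hmem : α ∈ Set.Icc (Phibar b) (Phibar 0) := by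
    rw [Phibar_zero]
    exact ⟨by linarith, by linarith⟩
  have := intermediate_value_Icc' hb0 Phibar_continuous.continuousOn hmem
  obtain ⟨x, _, hx⟩ := this
  exact ⟨x, hx⟩

end PhibarAux

/-- For `α ∈ (0, 1/2)`, the number `x = Φ̄⁻¹(α)` is positive and satisfies
`log(1/α) + log(1/√(2π)) - 1 < x² < 2 log(1/α) + log(1/π)`. -/
theorem stmt7 (α : ℝ) (hα : α ∈ Set.Ioo (0 : ℝ) (1 / 2)) :
    0 < PhibarInv α ∧
    Real.log (1 / α) + Real.log (1 / Real.sqrt (2 * Real.pi)) - 1 < (PhibarInv α) ^ 2 ∧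
    (PhibarInv α) ^ 2 < 2 * Real.log (1 / α) + Real.log (1 / Real.pi) := by
  obtain ⟨hα0, hα2⟩ := hα
  obtain ⟨x, hx⟩ := PhibarAux.exists_Phibar_eq hα0 hα2
  have hz : Phibar (PhibarInv α) = α := Function.invFun_eq ⟨x, hx⟩
  set z := PhibarInv α with hzdef
  have hzpos : 0 < z := by
    by_contra h
    push_neg at h
    have := PhibarAux.Phibar_strictAnti.antitone h
    rw [PhibarAux.Phibar_zero, hz] at this
    linarith
  have hs := PhibarAux.sqrt2pi_pos
  refine ⟨hzpos, ?_, ?_⟩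
  · -- lower bound on z^2
    have hB := PhibarAux.Phibar_gt hzpos
    rw [hz] at hB
    have hlpos : 0 < (Real.sqrt (2 * Real.pi))⁻¹ * Real.exp (-(z ^ 2 + 1)) := by positivity
    have hlog := Real.log_lt_log hlpos hB
    rw [Real.log_mul (by positivity) (Real.exp_pos _).ne', Real.log_exp,
      Real.log_inv] at hlog
    rw [one_div α, one_div (Real.sqrt (2 * Real.pi)), Real.log_inv, Real.log_inv]
    linarith
  · -- upper bound on z^2
    have hA := PhibarAux.Phibar_le hzpos.le
    rw [hz] at hA
    have hlog := Real.log_le_log (by positivity) hA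
    rw [Real.log_div (Real.exp_pos _).ne' (by norm_num), Real.log_exp] at hlog
    have hpi4 : Real.log Real.pi < 2 * Real.log 2 := by
      have h4 : Real.pi < 4 := by
        have := Real.pi_lt_d2; linarith
      have := Real.log_lt_log Real.pi_pos h4
      rw [show (4 : ℝ) = 2 ^ 2 by norm_num, Real.log_pow] at this
      push_cast at this
      linarith
    rw [one_div α, one_div Real.pi, Real.log_inv, Real.log_inv]
    linarith
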